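/- The natural left action of SL(3,Z) on P^2(Z/N) (column vectors modulo units) is transitive, and the stabilizer of the point (1:0:0) equals the congruence subgroup Γ₀(N) = {(a_ij) ∈ SL(3,Z) : a₂₁ ≡ 0 mod N and a₃₁ ≡ 0 mod N}. Consequently SL(3,Z)/Γ₀(N) is in bijection with P^2(Z/N). -/

import Mathlib

/-- A triple in `(ZMod N)^3` is unimodular if its entries generate the unit ideal. -/
def Unimodular {N : ℕ} (v : Fin 3 → ZMod N) : Prop :=
  Ideal.span ({v 0, v 1, v 2} : Set (ZMod N)) = ⊤

/-- The set of unimodular triples. -/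
def UniTriple (N : ℕ) := {v : Fin 3 → ZMod N // Unimodular v}

/-- `P²(ZMod N)`: unimodular triples modulo multiplication by units. -/
def P2 (N : ℕ) :=
  Quot (fun v w : UniTriple N => ∃ u : (ZMod N)ˣ, (u : ZMod N) • v.1 = w.1)

/-- The action of `SL(3,ℤ)` on column vectors over `ZMod N`. -/
def act (N : ℕ) (g : Matrix.SpecialLinearGroup (Fin 3) ℤ) (v : Fin 3 → ZMod N) :
    Fin 3 → ZMod N :=
  (g.val.map (Int.cast : ℤ → ZMod N)).mulVec v

abbrev SL3' := Matrix.SpecialLinearGroup (Fin 3) ℤ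

lemma map_eq' (N : ℕ) (A : Matrix (Fin 3) (Fin 3) ℤ) :
    A.map (Int.cast : ℤ → ZMod N) = A.map (Int.castRingHom (ZMod N)) := rfl

lemma act_mul (N : ℕ) (g h : SL3') (v : Fin 3 → ZMod N) :
    act N (g * h) v = act N g (act N h v) := by
  show ((g.val * h.val).map (Int.cast : ℤ → ZMod N)).mulVec v = _
  rw [map_eq', Matrix.map_mul, ← Matrix.mulVec_mulVec]
  rfl

lemma act_one (N : ℕ) (v : Fin 3 → ZMod N) : act N 1 v = v := by
  show ((1 : Matrix (Fin 3) (Fin 3) ℤ).map (Int.cast : ℤ → ZMod N)).mulVec v = v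
  rw [map_eq', Matrix.map_one _ (map_zero _) (map_one _), Matrix.one_mulVec]

lemma act_smul (N : ℕ) (g : SL3') (c : ZMod N) (v : Fin 3 → ZMod N) :
    act N g (c • v) = c • act N g v := by
  simp [act, Matrix.mulVec_smul]

lemma act_e1 (N : ℕ) (g : SL3') (i : Fin 3) :
    act N g ![1, 0, 0] i = ((g.val i 0 : ℤ) : ZMod N) := by
  simp [act, Matrix.mulVec, dotProduct, Fin.sum_univ_three]

lemma act_apply (N : ℕ) (g : SL3') (v : Fin 3 → ZMod N) (i : Fin 3) :
    act N g v i = ((g.val i 0 : ℤ) : ZMod N) * v 0 + ((g.val i 1 : ℤ) : ZMod N) * v 1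
      + ((g.val i 2 : ℤ) : ZMod N) * v 2 := by
  simp [act, Matrix.mulVec, dotProduct, Fin.sum_univ_three]

lemma bezout2 (a b : ℤ) : ∃ p q r s : ℤ,
    p * s - q * r = 1 ∧ p * a + q * b = Int.gcd a b ∧ r * a + s * b = 0 := by
  by_cases h : a = 0 ∧ b = 0
  · exact ⟨1, 0, 0, 1, by norm_num, by simp [h.1, h.2], by simp [h.1, h.2]⟩
  · have hg : (Int.gcd a b : ℤ) ≠ 0 := by
      simpa [Int.gcd_eq_zero_iff] using h
    obtain ⟨a', ha⟩ : (Int.gcd a b : ℤ) ∣ a := Int.gcd_dvd_left a b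
    obtain ⟨b', hb⟩ : (Int.gcd a b : ℤ) ∣ b := Int.gcd_dvd_right a b
    have hbez : (Int.gcd a b : ℤ) = a * Int.gcdA a b + b * Int.gcdB a b :=
      Int.gcd_eq_gcd_ab a b
    have key : (Int.gcd a b : ℤ) * (Int.gcdA a b * a' + Int.gcdB a b * b')
        = (Int.gcd a b : ℤ) * 1 := by
      rw [mul_one]
      calc (Int.gcd a b : ℤ) * (Int.gcdA a b * a' + Int.gcdB a b * b')
          = ((Int.gcd a b : ℤ) * a') * Int.gcdA a b
            + ((Int.gcd a b : ℤ) * b') * Int.gcdB a b := by ring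
        _ = a * Int.gcdA a b + b * Int.gcdB a b := by rw [← ha, ← hb]
        _ = _ := hbez.symm
    have h1 : Int.gcdA a b * a' + Int.gcdB a b * b' = 1 := mul_left_cancel₀ hg key
    exact ⟨Int.gcdA a b, Int.gcdB a b, -b', a',
      by linear_combination h1, by linear_combination -hbez,
      by linear_combination (-b') * ha + a' * hb⟩

lemma reduce (N : ℕ) (v : Fin 3 → ZMod N) (a b c : ℤ)
    (h0 : (a : ZMod N) = v 0) (h1 : (b : ZMod N) = v 1) (h2 : (c : ZMod N) = v 2) :
    ∃ g : SL3', ∃ d : ℤ, d ∣ a ∧ d ∣ b ∧ d ∣ c ∧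
      act N g v = (d : ZMod N) • ![1, 0, 0] := by
  obtain ⟨p, q, r, s, hdet1, hco1, hz1⟩ := bezout2 b c
  obtain ⟨p', q', r', s', hdet2, hco2, hz2⟩ := bezout2 a (Int.gcd b c)
  have m1det : (!![1,0,0; 0,p,q; 0,r,s] : Matrix (Fin 3) (Fin 3) ℤ).det = 1 := by
    rw [Matrix.det_fin_three]
    simp
    linear_combination hdet1
  have m2det : (!![p',q',0; r',s',0; 0,0,1] : Matrix (Fin 3) (Fin 3) ℤ).det = 1 := by
    rw [Matrix.det_fin_three]
    simp
    linear_combination hdet2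
  set G1 : SL3' := ⟨_, m1det⟩
  set G2 : SL3' := ⟨_, m2det⟩
  refine ⟨G2 * G1, Int.gcd a (Int.gcd b c), Int.gcd_dvd_left _ _,
    dvd_trans (Int.gcd_dvd_right _ _) (Int.gcd_dvd_left _ _),
    dvd_trans (Int.gcd_dvd_right _ _) (Int.gcd_dvd_right _ _), ?_⟩
  have step1 : act N G1 v = ![v 0, ((Int.gcd b c : ℤ) : ZMod N), 0] := by
    funext i
    fin_cases i
    · rw [act_apply]; show _ = v 0; simp [G1]
    · rw [act_apply]
      show _ = ((Int.gcd b c : ℤ) : ZMod N)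
      rw [← hco1]
      push_cast
      rw [h1, h2]
      simp [G1, Matrix.vecHead, Matrix.vecTail]
    · rw [act_apply]
      show _ = (0 : ZMod N)
      have : ((r * b + s * c : ℤ) : ZMod N) = 0 := by rw [hz1]; norm_num
      push_cast at this
      rw [h1, h2] at this
      simp [G1, Matrix.vecHead, Matrix.vecTail]
      linear_combination this
  rw [act_mul, step1]
  funext i
  fin_cases i
  · rw [act_apply]
    show _ = ((Int.gcd a (Int.gcd b c) : ℤ) : ZMod N) • (1 : ZMod N)
    rw [smul_eq_mul, mul_one, ← hco2]
    push_cast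
    rw [h0]
    simp [G2, Matrix.vecHead, Matrix.vecTail]
  · rw [act_apply]
    show _ = ((Int.gcd a (Int.gcd b c) : ℤ) : ZMod N) • (0 : ZMod N)
    rw [smul_eq_mul, mul_zero]
    have : ((r' * a + s' * Int.gcd b c : ℤ) : ZMod N) = 0 := by rw [hz2]; norm_num
    push_cast at this
    rw [h0] at this
    simp [G2, Matrix.vecHead, Matrix.vecTail]
    linear_combination this
  · rw [act_apply]
    show _ = ((Int.gcd a (Int.gcd b c) : ℤ) : ZMod N) • (0 : ZMod N)
    rw [smul_eq_mul, mul_zero]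
    simp [G2, Matrix.vecHead, Matrix.vecTail]

lemma to_e1 (N : ℕ) (v : UniTriple N) :
    ∃ g : SL3', ∃ u : (ZMod N)ˣ, act N g v.1 = (u : ZMod N) • ![1, 0, 0] := by
  obtain ⟨a, ha⟩ := ZMod.intCast_surjective (v.1 0)
  obtain ⟨b, hb⟩ := ZMod.intCast_surjective (v.1 1)
  obtain ⟨c, hc⟩ := ZMod.intCast_surjective (v.1 2)
  obtain ⟨g, d, da, db, dc, hact⟩ := reduce N v.1 a b c ha hb hc
  have h1 : (1 : ZMod N) ∈ Ideal.span ({v.1 0, v.1 1, v.1 2} : Set (ZMod N)) := by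
    rw [v.2]; trivial
  rw [Ideal.mem_span_insert] at h1
  obtain ⟨k0, z, hz, hsum⟩ := h1
  rw [Ideal.mem_span_pair] at hz
  obtain ⟨k1, k2, hz'⟩ := hz
  have d0 : ((d : ℤ) : ZMod N) ∣ v.1 0 := by
    rw [← ha]; exact map_dvd (Int.castRingHom (ZMod N)) da
  have d1 : ((d : ℤ) : ZMod N) ∣ v.1 1 := by
    rw [← hb]; exact map_dvd (Int.castRingHom (ZMod N)) db
  have d2 : ((d : ℤ) : ZMod N) ∣ v.1 2 := by
    rw [← hc]; exact map_dvd (Int.castRingHom (ZMod N)) dc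
  have hdvd : ((d : ℤ) : ZMod N) ∣ 1 := by
    rw [hsum, ← hz']
    exact dvd_add (d0.mul_left k0) (dvd_add (d1.mul_left k1) (d2.mul_left k2))
  have hu : IsUnit ((d : ℤ) : ZMod N) := isUnit_of_dvd_one hdvd
  exact ⟨g, hu.unit, by rw [hact, hu.unit_spec]⟩

lemma part1 (N : ℕ) (v w : UniTriple N) :
    ∃ g : SL3', ∃ u : (ZMod N)ˣ, act N g v.1 = (u : ZMod N) • w.1 := by
  obtain ⟨gv, uv, hv⟩ := to_e1 N v
  obtain ⟨gw, uw, hw⟩ := to_e1 N w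
  refine ⟨gw⁻¹ * gv, uv * uw⁻¹, ?_⟩
  have hback : act N gw⁻¹ ((uw : ZMod N) • ![1, 0, 0]) = w.1 := by
    rw [← hw, ← act_mul, inv_mul_cancel, act_one]
  have : act N gw⁻¹ ![1, 0, 0] = ((uw⁻¹ : (ZMod N)ˣ) : ZMod N) • w.1 := by
    rw [← hback, act_smul, ← smul_assoc, smul_eq_mul]
    norm_num
  rw [act_mul, hv, act_smul, this, ← smul_assoc, smul_eq_mul]
  norm_num

lemma stab_iff (N : ℕ) (g : SL3') :
    (∃ u : (ZMod N)ˣ, act N g ![1, 0, 0] = (u : ZMod N) • ![1, 0, 0]) ↔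
      (((g.val 1 0 : ℤ) : ZMod N) = 0 ∧ ((g.val 2 0 : ℤ) : ZMod N) = 0) := by
  constructor
  · rintro ⟨u, hu⟩
    constructor
    · have := congrFun hu 1
      rw [act_e1] at this
      simpa using this
    · have := congrFun hu 2
      rw [act_e1] at this
      simpa using this
  · rintro ⟨h1, h2⟩
    have hd := g.prop
    rw [Matrix.det_fin_three] at hd
    have hcast : ((g.val 0 0 * g.val 1 1 * g.val 2 2 - g.val 0 0 * g.val 1 2 * g.val 2 1
        - g.val 0 1 * g.val 1 0 * g.val 2 2 + g.val 0 1 * g.val 1 2 * g.val 2 0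
        + g.val 0 2 * g.val 1 0 * g.val 2 1 - g.val 0 2 * g.val 1 1 * g.val 2 0 : ℤ)
        : ZMod N) = 1 := by rw [hd]; norm_num
    push_cast at hcast
    have hu : IsUnit ((g.val 0 0 : ℤ) : ZMod N) := by
      refine IsUnit.of_mul_eq_one
        (((g.val 1 1 : ℤ) : ZMod N) * ((g.val 2 2 : ℤ) : ZMod N)
          - ((g.val 1 2 : ℤ) : ZMod N) * ((g.val 2 1 : ℤ) : ZMod N)) ?_
      linear_combination hcast
        + (((g.val 0 1 : ℤ) : ZMod N) * ((g.val 2 2 : ℤ) : ZMod N)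
          - ((g.val 0 2 : ℤ) : ZMod N) * ((g.val 2 1 : ℤ) : ZMod N)) * h1
        + (((g.val 0 2 : ℤ) : ZMod N) * ((g.val 1 1 : ℤ) : ZMod N)
          - ((g.val 0 1 : ℤ) : ZMod N) * ((g.val 1 2 : ℤ) : ZMod N)) * h2
    refine ⟨hu.unit, ?_⟩
    funext i
    rw [act_e1]
    fin_cases i
    · simp [hu.unit_spec]
    · simpa using h1
    · simpa using h2

lemma uni_pull (N : ℕ) (g : SL3') (v : Fin 3 → ZMod N) (h : Unimodular (act N g v)) :
    Unimodular v := by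
  have hmem : ∀ i, act N g v i ∈ Ideal.span ({v 0, v 1, v 2} : Set (ZMod N)) := by
    intro i
    rw [act_apply]
    refine add_mem (add_mem ?_ ?_) ?_ <;>
      exact Ideal.mul_mem_left _ _ (Ideal.subset_span (by simp))
  have hle : Ideal.span ({act N g v 0, act N g v 1, act N g v 2} : Set (ZMod N))
      ≤ Ideal.span ({v 0, v 1, v 2} : Set (ZMod N)) := by
    rw [Ideal.span_le]
    intro x hx
    simp only [Set.mem_insert_iff, Set.mem_singleton_iff] at hx
    rcases hx with rfl | rfl | rfl <;> exact hmem _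
  exact eq_top_iff.mpr (h ▸ hle)

lemma uni_e1 (N : ℕ) : Unimodular (![1, 0, 0] : Fin 3 → ZMod N) := by
  apply Ideal.eq_top_of_isUnit_mem _ (Ideal.subset_span (Set.mem_insert _ _))
  show IsUnit ((![1, 0, 0] : Fin 3 → ZMod N) 0)
  simp

lemma uni_col (N : ℕ) (g : SL3') : Unimodular (act N g ![1, 0, 0]) := by
  apply uni_pull N g⁻¹
  rw [← act_mul, inv_mul_cancel, act_one]
  exact uni_e1 N

/-- The relation on `UniTriple N`. -/
abbrev srel (N : ℕ) (v w : UniTriple N) : Prop := ∃ u : (ZMod N)ˣ, (u : ZMod N) • v.1 = w.1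

lemma srel_of_eq {N : ℕ} {x y : UniTriple N}
    (h : Quot.mk (srel N) x = Quot.mk (srel N) y) : srel N x y := by
  have hE := Quot.eq.mp h
  clear h
  induction hE with
  | rel a b hab => exact hab
  | refl a => exact ⟨1, by simp⟩
  | symm a b _ ih =>
    obtain ⟨u, hu⟩ := ih
    refine ⟨u⁻¹, ?_⟩
    rw [← hu, ← smul_assoc, smul_eq_mul]
    norm_num
  | trans a b c _ _ ih1 ih2 =>
    obtain ⟨u, hu⟩ := ih1
    obtain ⟨u', hu'⟩ := ih2
    exact ⟨u' * u, by rw [← hu', ← hu, ← smul_assoc, smul_eq_mul]; norm_num⟩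

theorem SL3_action_transitive_stabilizer_Gamma0 (N : ℕ) (hN : 0 < N) :
    (∀ v w : UniTriple N, ∃ g : Matrix.SpecialLinearGroup (Fin 3) ℤ,
        ∃ u : (ZMod N)ˣ, act N g v.1 = (u : ZMod N) • w.1) ∧
    (∀ g : Matrix.SpecialLinearGroup (Fin 3) ℤ,
        (∃ u : (ZMod N)ˣ, act N g ![1, 0, 0] = (u : ZMod N) • ![1, 0, 0]) ↔
          (((g.val 1 0 : ℤ) : ZMod N) = 0 ∧ ((g.val 2 0 : ℤ) : ZMod N) = 0)) ∧
    Nonempty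
      ((Quot fun g h : Matrix.SpecialLinearGroup (Fin 3) ℤ =>
          (((g⁻¹ * h).val 1 0 : ℤ) : ZMod N) = 0 ∧
          (((g⁻¹ * h).val 2 0 : ℤ) : ZMod N) = 0) ≃ P2 N) := by
  refine ⟨part1 N, stab_iff N, ?_⟩
  set R := fun g h : SL3' =>
    (((g⁻¹ * h).val 1 0 : ℤ) : ZMod N) = 0 ∧ (((g⁻¹ * h).val 2 0 : ℤ) : ZMod N) = 0
  have Fwd : ∀ g h : SL3', R g h →
      Quot.mk (srel N) (⟨act N g ![1,0,0], uni_col N g⟩ : UniTriple N)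
        = Quot.mk (srel N) ⟨act N h ![1,0,0], uni_col N h⟩ := by
    intro g h hgh
    obtain ⟨u, hu⟩ := (stab_iff N (g⁻¹ * h)).mpr hgh
    apply Quot.sound
    refine ⟨u, ?_⟩
    show (u : ZMod N) • act N g ![1,0,0] = act N h ![1,0,0]
    have : act N h ![1,0,0] = act N g (act N (g⁻¹ * h) ![1,0,0]) := by
      rw [← act_mul, mul_inv_cancel_left]
    rw [this, hu, act_smul]
  let F : (Quot R) → P2 N :=
    Quot.lift (fun g => Quot.mk (srel N) ⟨act N g ![1,0,0], uni_col N g⟩) Fwd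
  refine ⟨Equiv.ofBijective F ⟨?_, ?_⟩⟩
  · -- injective
    intro x y
    induction x using Quot.ind with | _ g =>
    induction y using Quot.ind with | _ h =>
    intro hFxy
    have hS : srel N ⟨act N g ![1,0,0], uni_col N g⟩ ⟨act N h ![1,0,0], uni_col N h⟩ :=
      srel_of_eq hFxy
    obtain ⟨u, hu⟩ := hS
    change (u : ZMod N) • act N g ![1,0,0] = act N h ![1,0,0] at hu
    apply Quot.sound
    apply (stab_iff N (g⁻¹ * h)).mp
    refine ⟨u, ?_⟩
    have : act N (g⁻¹ * h) ![1,0,0] = act N g⁻¹ (act N h ![1,0,0]) := act_mul ..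
    rw [this, ← hu, act_smul, ← act_mul, inv_mul_cancel, act_one]
  · -- surjective
    intro y
    induction y using Quot.ind with | _ t =>
    obtain ⟨g, u, hg⟩ := part1 N ⟨![1,0,0], uni_e1 N⟩ t
    refine ⟨Quot.mk R g, ?_⟩
    show Quot.mk (srel N) ⟨act N g ![1,0,0], uni_col N g⟩ = Quot.mk (srel N) t
    apply Quot.sound
    refine ⟨u⁻¹, ?_⟩
    show ((u⁻¹ : (ZMod N)ˣ) : ZMod N) • act N g ![1,0,0] = t.1
    rw [hg, ← smul_assoc, smul_eq_mul]
    norm_num
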